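/- Let 0 ≤ p₁ ≤ 1 and let A₁,…,Aₙ be {0,1}-valued random variables such that P[Aᵢ = 1 | any outcome of A₁,…,A_{i−1}] ≥ p₁ whenever the conditioning event has positive probability. Then for every ℓ ≤ n and every k ≥ 0, P[Σ_{i≤ℓ} Aᵢ ≤ k] ≤ P[B(ℓ, p₁) ≤ k], where B(ℓ, p₁) is a binomial random variable with parameters ℓ and p₁. -/

import Mathlib

open MeasureTheory Finset
open scoped Classical ENNReal

/-- The event that, among the variables `A_j` with `j < i`, exactly those with `j ∈ J`
occur. -/
def histEvent {Ω : Type*} {n : ℕ} (E : Fin n → Set Ω) (i : Fin n)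
    (J : Finset (Fin n)) : Set Ω :=
  { ω | ∀ j : Fin n, j < i → (ω ∈ E j ↔ j ∈ J) }

private lemma binom_cdf_step (p : ℝ) (ℓ k : ℕ) :
    (∑ j ∈ Finset.range (k+1), (((ℓ+1).choose j : ℝ)) * p ^ j * (1-p) ^ (ℓ+1-j))
    = (1-p) * (∑ j ∈ Finset.range (k+1), ((ℓ.choose j : ℝ)) * p ^ j * (1-p) ^ (ℓ-j))
      + p * (∑ j ∈ Finset.range k, ((ℓ.choose j : ℝ)) * p ^ j * (1-p) ^ (ℓ-j)) := by
  induction k with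
  | zero => simp [pow_succ]; ring
  | succ k ih =>
    rw [Finset.sum_range_succ, ih,
        Finset.sum_range_succ (f := fun j => ((ℓ.choose j : ℝ)) * p ^ j * (1-p) ^ (ℓ-j)) (n := k+1),
        Finset.sum_range_succ (f := fun j => ((ℓ.choose j : ℝ)) * p ^ j * (1-p) ^ (ℓ-j)) (n := k)]
    have hch : ((ℓ+1).choose (k+1) : ℝ) = (ℓ.choose k : ℝ) + (ℓ.choose (k+1) : ℝ) := by
      rw [Nat.choose_succ_succ]; push_cast; ring
    by_cases hk : k + 1 ≤ ℓ
    · have h1 : ℓ + 1 - (k+1) = (ℓ - (k+1)) + 1 := by omega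
      have h2 : ℓ - k = (ℓ - (k+1)) + 1 := by omega
      rw [hch, h1, h2, pow_succ, pow_succ]
      ring
    · have hc1 : (ℓ.choose (k+1) : ℝ) = 0 := by
        rw [Nat.choose_eq_zero_of_lt (by omega)]; norm_num
      by_cases hk' : k ≤ ℓ
      · have h1 : ℓ + 1 - (k+1) = 0 := by omega
        have h2 : ℓ - k = 0 := by omega
        rw [hch, hc1, h1, h2]
        ring
      · have hc2 : (ℓ.choose k : ℝ) = 0 := by
          rw [Nat.choose_eq_zero_of_lt (by omega)]; norm_num
        have hc3 : ((ℓ+1).choose (k+1) : ℝ) = 0 := by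
          rw [Nat.choose_eq_zero_of_lt (by omega)]; norm_num
        rw [hc1, hc2, hc3]; ring

private lemma binom_cdf_nonneg {p : ℝ} (hp : 0 ≤ p) (hp' : p ≤ 1) (ℓ m : ℕ) :
    0 ≤ ∑ j ∈ Finset.range m, ((ℓ.choose j : ℝ)) * p ^ j * (1-p) ^ (ℓ-j) := by
  have h1p : (0:ℝ) ≤ 1 - p := by linarith
  refine Finset.sum_nonneg fun j _ => ?_
  exact mul_nonneg (mul_nonneg (by positivity) (pow_nonneg hp _)) (pow_nonneg h1p _)

section aux
variable {Ω : Type*} [MeasurableSpace Ω] {n : ℕ} (E : Fin n → Set Ω)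

noncomputable def pbdCnt (ℓ : ℕ) (ω : Ω) : ℕ :=
  (Finset.univ.filter fun i : Fin n => (i : ℕ) < ℓ ∧ ω ∈ E i).card

omit [MeasurableSpace Ω] in
lemma pbdCnt_succ (ℓ : ℕ) (hℓ : ℓ < n) (ω : Ω) :
    pbdCnt E (ℓ+1) ω = pbdCnt E ℓ ω + (if ω ∈ E ⟨ℓ, hℓ⟩ then 1 else 0) := by
  unfold pbdCnt
  by_cases hE : ω ∈ E ⟨ℓ, hℓ⟩
  · rw [if_pos hE]
    have heq : (Finset.univ.filter fun i : Fin n => (i:ℕ) < ℓ+1 ∧ ω ∈ E i)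
        = insert ⟨ℓ,hℓ⟩ (Finset.univ.filter fun i : Fin n => (i:ℕ) < ℓ ∧ ω ∈ E i) := by
      ext j
      simp only [Finset.mem_filter, Finset.mem_univ, true_and, Finset.mem_insert]
      constructor
      · rintro ⟨hj, hEj⟩
        rcases Nat.lt_succ_iff_lt_or_eq.1 hj with h | h
        · exact Or.inr ⟨h, hEj⟩
        · exact Or.inl (Fin.ext h)
      · rintro (rfl | ⟨hj, hEj⟩)
        · exact ⟨Nat.lt_succ_self ℓ, hE⟩
        · exact ⟨Nat.lt_succ_of_lt hj, hEj⟩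
    rw [heq, Finset.card_insert_of_notMem (by simp [Finset.mem_filter])]
  · rw [if_neg hE]
    have heq : (Finset.univ.filter fun i : Fin n => (i:ℕ) < ℓ+1 ∧ ω ∈ E i)
        = (Finset.univ.filter fun i : Fin n => (i:ℕ) < ℓ ∧ ω ∈ E i) := by
      ext j
      simp only [Finset.mem_filter, Finset.mem_univ, true_and]
      constructor
      · rintro ⟨hj, hEj⟩
        rcases Nat.lt_succ_iff_lt_or_eq.1 hj with h | h
        · exact ⟨h, hEj⟩
        · exact absurd hEj (by rw [show j = ⟨ℓ,hℓ⟩ from Fin.ext h]; exact hE)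
      · rintro ⟨hj, hEj⟩; exact ⟨Nat.lt_succ_of_lt hj, hEj⟩
    rw [heq]; simp

lemma histEvent_measurable (hmeas : ∀ i, MeasurableSet (E i)) (i : Fin n)
    (J : Finset (Fin n)) : MeasurableSet (histEvent E i J) := by
  have heq : histEvent E i J = ⋂ j ∈ Finset.Iio i, (if j ∈ J then E j else (E j)ᶜ) := by
    ext ω
    simp only [histEvent, Set.mem_setOf_eq, Set.mem_iInter, Finset.mem_Iio]
    constructor
    · intro h j hj
      by_cases hJ : j ∈ J
      · simp only [if_pos hJ]; exact (h j hj).2 hJ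
      · simp only [if_neg hJ]; exact fun hE => hJ ((h j hj).1 hE)
    · intro h j hj
      have := h j hj
      by_cases hJ : j ∈ J
      · rw [if_pos hJ] at this; exact ⟨fun _ => hJ, fun _ => this⟩
      · rw [if_neg hJ] at this
        exact ⟨fun hE => absurd hE this, fun hj' => absurd hj' hJ⟩
  rw [heq]
  refine MeasurableSet.biInter (Set.to_countable _) fun j _ => ?_
  by_cases hJ : j ∈ J <;> simp [hJ, hmeas j, (hmeas j).compl]

omit [MeasurableSpace Ω] in
lemma mem_histEvent_iff {i : Fin n} {J : Finset (Fin n)} (hJ : J ⊆ Finset.Iio i) (ω : Ω) :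
    ω ∈ histEvent E i J ↔ (Finset.Iio i).filter (fun j => ω ∈ E j) = J := by
  constructor
  · intro h
    ext j
    simp only [Finset.mem_filter, Finset.mem_Iio]
    constructor
    · rintro ⟨hji, hE⟩; exact (h j hji).1 hE
    · intro hjJ
      have hji : j < i := Finset.mem_Iio.1 (hJ hjJ)
      exact ⟨hji, (h j hji).2 hjJ⟩
  · intro h j hji
    rw [← h]
    simp [Finset.mem_filter, Finset.mem_Iio, hji]

omit [MeasurableSpace Ω] in
lemma pbdCnt_coe (i : Fin n) (ω : Ω) :
    pbdCnt E (i : ℕ) ω = ((Finset.Iio i).filter (fun j => ω ∈ E j)).card := by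
  unfold pbdCnt
  congr 1
  ext j
  simp only [Finset.mem_filter, Finset.mem_univ, true_and, Finset.mem_Iio, Fin.lt_def]

omit [MeasurableSpace Ω] in
/-- The partition of the exact-count set into history events. -/
lemma cnt_eq_biUnion (i : Fin n) (k : ℕ) :
    {ω : Ω | pbdCnt E (i : ℕ) ω = k}
      = ⋃ J ∈ ((Finset.Iio i).powerset.filter fun J => J.card = k), histEvent E i J := by
  ext ω
  simp only [Set.mem_setOf_eq, Set.mem_iUnion, Finset.mem_filter, Finset.mem_powerset]
  constructor
  · intro h
    refine ⟨(Finset.Iio i).filter (fun j => ω ∈ E j), ⟨Finset.filter_subset _ _, ?_⟩, ?_⟩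
    · rw [← pbdCnt_coe]; exact h
    · exact (mem_histEvent_iff E (Finset.filter_subset _ _) ω).2 rfl
  · rintro ⟨J, ⟨hJ, hcard⟩, hmem⟩
    rw [pbdCnt_coe, (mem_histEvent_iff E hJ ω).1 hmem]
    exact hcard

omit [MeasurableSpace Ω] in
lemma histEvent_disjoint {i : Fin n} {J J' : Finset (Fin n)} (hJ : J ⊆ Finset.Iio i)
    (hJ' : J' ⊆ Finset.Iio i) (hne : J ≠ J') :
    Disjoint (histEvent E i J) (histEvent E i J') := by
  rw [Set.disjoint_left]
  intro ω h h'
  exact hne (((mem_histEvent_iff E hJ ω).1 h).symm.trans ((mem_histEvent_iff E hJ' ω).1 h'))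

lemma cnt_exact_measurable (hmeas : ∀ i, MeasurableSet (E i)) (i : Fin n) (k : ℕ) :
    MeasurableSet {ω : Ω | pbdCnt E (i : ℕ) ω = k} := by
  rw [cnt_eq_biUnion]
  exact Finset.measurableSet_biUnion _ fun J _ => histEvent_measurable E hmeas i J

lemma meas_cnt_inter (μ : Measure Ω) (hmeas : ∀ i, MeasurableSet (E i)) (i : Fin n) (k : ℕ)
    (T : Set Ω) (hT : MeasurableSet T) :
    μ ({ω : Ω | pbdCnt E (i : ℕ) ω = k} ∩ T)
      = ∑ J ∈ ((Finset.Iio i).powerset.filter fun J => J.card = k),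
          μ (histEvent E i J ∩ T) := by
  rw [cnt_eq_biUnion, Set.iUnion₂_inter]
  rw [measure_biUnion_finset]
  · intro J hJ J' hJ' hne
    simp only [Finset.mem_coe, Finset.mem_filter, Finset.mem_powerset] at hJ hJ'
    exact Set.disjoint_of_subset Set.inter_subset_left Set.inter_subset_left
      (histEvent_disjoint E hJ.1 hJ'.1 hne)
  · intro J _
    exact (histEvent_measurable E hmeas i J).inter hT

lemma histEvent_diff_bound (μ : Measure Ω) [IsFiniteMeasure μ]
    (hmeas : ∀ i, MeasurableSet (E i)) {p₁ : ℝ} (hp₁ : 0 ≤ p₁) (hp₁' : p₁ ≤ 1)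
    {i : Fin n} {J : Finset (Fin n)}
    (hc : ENNReal.ofReal p₁ * μ (histEvent E i J) ≤ μ (E i ∩ histEvent E i J)) :
    μ (histEvent E i J ∩ (E i)ᶜ) ≤ ENNReal.ofReal (1 - p₁) * μ (histEvent E i J) := by
  set H := histEvent E i J with hH
  have hfin : ENNReal.ofReal p₁ * μ H ≠ ∞ :=
    ENNReal.mul_ne_top ENNReal.ofReal_ne_top (measure_ne_top μ H)
  have hsplit : μ (H ∩ E i) + μ (H \ E i) = μ H := measure_inter_add_diff H (hmeas i)
  have hsum : ENNReal.ofReal p₁ + ENNReal.ofReal (1 - p₁) = 1 := by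
    rw [← ENNReal.ofReal_add hp₁ (by linarith)]
    norm_num
  have hdiff : H ∩ (E i)ᶜ = H \ E i := (Set.diff_eq H (E i)).symm
  rw [hdiff]
  have key : ENNReal.ofReal p₁ * μ H + μ (H \ E i)
      ≤ ENNReal.ofReal p₁ * μ H + ENNReal.ofReal (1 - p₁) * μ H := by
    calc ENNReal.ofReal p₁ * μ H + μ (H \ E i)
        ≤ μ (H ∩ E i) + μ (H \ E i) := by
          refine add_le_add_left ?_ _
          rw [Set.inter_comm]
          exact hc
      _ = μ H := hsplit
      _ = (ENNReal.ofReal p₁ + ENNReal.ofReal (1 - p₁)) * μ H := by rw [hsum, one_mul]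
      _ = ENNReal.ofReal p₁ * μ H + ENNReal.ofReal (1 - p₁) * μ H := by rw [add_mul]
  exact (ENNReal.add_le_add_iff_left hfin).1 key

end aux

theorem pseudo_binomial_domination {Ω : Type*} [MeasurableSpace Ω] (μ : Measure Ω)
    [IsProbabilityMeasure μ] {n : ℕ} (E : Fin n → Set Ω)
    (hmeas : ∀ i, MeasurableSet (E i))
    (p₁ : ℝ) (hp₁ : 0 ≤ p₁) (hp₁' : p₁ ≤ 1)
    (hcond : ∀ (i : Fin n) (J : Finset (Fin n)), J ⊆ Finset.Iio i →
      ENNReal.ofReal p₁ * μ (histEvent E i J) ≤ μ (E i ∩ histEvent E i J)) :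
    ∀ ℓ ≤ n, ∀ k : ℕ,
      μ { ω | (Finset.univ.filter fun i : Fin n => (i : ℕ) < ℓ ∧ ω ∈ E i).card ≤ k } ≤
        ENNReal.ofReal
          (∑ j ∈ Finset.range (k + 1),
            (ℓ.choose j : ℝ) * p₁ ^ j * (1 - p₁) ^ (ℓ - j)) := by
  intro ℓ
  induction ℓ with
  | zero =>
    intro _ k
    have hset : { ω : Ω | (Finset.univ.filter fun i : Fin n => (i : ℕ) < 0 ∧ ω ∈ E i).card ≤ k }
        = Set.univ := by
      ext ω; simp
    have hsum : (∑ j ∈ Finset.range (k + 1),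
        ((0:ℕ).choose j : ℝ) * p₁ ^ j * (1 - p₁) ^ (0 - j)) = 1 := by
      rw [Finset.sum_eq_single 0]
      · simp
      · intro j _ hj
        rw [Nat.choose_eq_zero_of_lt (by omega)]
        simp
      · simp
    rw [hset, hsum, measure_univ, ENNReal.ofReal_one]
  | succ ℓ ih =>
    intro hℓn k
    have hℓ : ℓ < n := hℓn
    set i : Fin n := ⟨ℓ, hℓ⟩ with hi
    have hicoe : (i : ℕ) = ℓ := rfl
    set a : ℝ := ∑ j ∈ Finset.range (k + 1), (ℓ.choose j : ℝ) * p₁ ^ j * (1 - p₁) ^ (ℓ - j)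
      with ha
    set b : ℝ := ∑ j ∈ Finset.range k, (ℓ.choose j : ℝ) * p₁ ^ j * (1 - p₁) ^ (ℓ - j) with hb
    set q : ℝ≥0∞ := ENNReal.ofReal (1 - p₁) with hq
    set p' : ℝ≥0∞ := ENNReal.ofReal p₁ with hp'
    have hsum1 : q + p' = 1 := by
      rw [hq, hp', ← ENNReal.ofReal_add (by linarith) hp₁]
      norm_num
    -- main sets
    have hgoalset : { ω : Ω | (Finset.univ.filter
        fun i' : Fin n => (i' : ℕ) < ℓ + 1 ∧ ω ∈ E i').card ≤ k }
        = {ω : Ω | pbdCnt E (ℓ+1) ω ≤ k} := rfl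
    have hihset : ∀ m, { ω : Ω | (Finset.univ.filter
        fun i' : Fin n => (i' : ℕ) < ℓ ∧ ω ∈ E i').card ≤ m }
        = {ω : Ω | pbdCnt E ℓ ω ≤ m} := fun _ => rfl
    -- inclusion
    have h1 : {ω : Ω | pbdCnt E (ℓ+1) ω ≤ k}
        ⊆ ({ω : Ω | pbdCnt E ℓ ω = k} ∩ (E i)ᶜ) ∪ {ω : Ω | pbdCnt E ℓ ω + 1 ≤ k} := by
      intro ω hω
      simp only [Set.mem_setOf_eq] at hω
      rw [pbdCnt_succ E ℓ hℓ ω] at hω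
      by_cases hE : ω ∈ E i
      · rw [if_pos hE] at hω
        exact Or.inr (by simpa using hω)
      · rw [if_neg hE] at hω
        by_cases hk : pbdCnt E ℓ ω + 1 ≤ k
        · exact Or.inr hk
        · exact Or.inl ⟨by simp only [Set.mem_setOf_eq]; omega, hE⟩
    -- diff bound
    have h2 : μ ({ω : Ω | pbdCnt E ℓ ω = k} ∩ (E i)ᶜ)
        ≤ q * μ {ω : Ω | pbdCnt E ℓ ω = k} := by
      have e1 : μ ({ω : Ω | pbdCnt E ℓ ω = k} ∩ (E i)ᶜ)
          = ∑ J ∈ ((Finset.Iio i).powerset.filter fun J => J.card = k),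
              μ (histEvent E i J ∩ (E i)ᶜ) := by
        rw [← hicoe] at *
        exact meas_cnt_inter E μ hmeas i k _ (hmeas i).compl
      have e2 : μ {ω : Ω | pbdCnt E ℓ ω = k}
          = ∑ J ∈ ((Finset.Iio i).powerset.filter fun J => J.card = k),
              μ (histEvent E i J) := by
        have := meas_cnt_inter E μ hmeas i k Set.univ MeasurableSet.univ
        simpa [Set.inter_univ] using this
      rw [e1, e2, Finset.mul_sum]
      refine Finset.sum_le_sum fun J hJ => ?_
      simp only [Finset.mem_filter, Finset.mem_powerset] at hJ
      exact histEvent_diff_bound E μ hmeas hp₁ hp₁' (hcond i J hJ.1)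
    -- bound on strict part
    have h3 : μ {ω : Ω | pbdCnt E ℓ ω + 1 ≤ k} ≤ ENNReal.ofReal b := by
      rcases k with _ | k'
      · have hempty : {ω : Ω | pbdCnt E ℓ ω + 1 ≤ 0} = ∅ := by ext ω; simp
        rw [hempty]; simp
      · have hset : {ω : Ω | pbdCnt E ℓ ω + 1 ≤ k' + 1} = {ω : Ω | pbdCnt E ℓ ω ≤ k'} := by
          ext ω; simp only [Set.mem_setOf_eq]; omega
        rw [hset, hb]
        exact ih (le_of_lt hℓ) k'
    -- additivity
    have h4 : μ {ω : Ω | pbdCnt E ℓ ω = k} + μ {ω : Ω | pbdCnt E ℓ ω + 1 ≤ k}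
        = μ {ω : Ω | pbdCnt E ℓ ω ≤ k} := by
      have hun : {ω : Ω | pbdCnt E ℓ ω ≤ k}
          = {ω : Ω | pbdCnt E ℓ ω = k} ∪ {ω : Ω | pbdCnt E ℓ ω + 1 ≤ k} := by
        ext ω; simp only [Set.mem_setOf_eq, Set.mem_union]; omega
      have hdisj : Disjoint {ω : Ω | pbdCnt E ℓ ω = k} {ω : Ω | pbdCnt E ℓ ω + 1 ≤ k} := by
        rw [Set.disjoint_left]
        intro ω h h'
        simp only [Set.mem_setOf_eq] at h h'
        omega
      have hmeas2 : MeasurableSet {ω : Ω | pbdCnt E ℓ ω + 1 ≤ k} := by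
        have heq : {ω : Ω | pbdCnt E ℓ ω + 1 ≤ k}
            = ⋃ m ∈ Finset.range k, {ω : Ω | pbdCnt E ℓ ω = m} := by
          ext ω
          simp only [Set.mem_setOf_eq, Set.mem_iUnion, Finset.mem_range]
          constructor
          · intro h; exact ⟨pbdCnt E ℓ ω, by omega, rfl⟩
          · rintro ⟨m, hm, rfl⟩; omega
        rw [heq]
        refine Finset.measurableSet_biUnion _ fun m _ => ?_
        rw [← hicoe]
        exact cnt_exact_measurable E hmeas i m
      rw [hun, measure_union hdisj hmeas2]
    -- conclusion via IH at k
    have ihk : μ {ω : Ω | pbdCnt E ℓ ω ≤ k} ≤ ENNReal.ofReal a := ih (le_of_lt hℓ) k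
    rw [hgoalset]
    calc μ {ω : Ω | pbdCnt E (ℓ+1) ω ≤ k}
        ≤ μ (({ω : Ω | pbdCnt E ℓ ω = k} ∩ (E i)ᶜ) ∪ {ω : Ω | pbdCnt E ℓ ω + 1 ≤ k}) :=
          measure_mono h1
      _ ≤ μ ({ω : Ω | pbdCnt E ℓ ω = k} ∩ (E i)ᶜ) + μ {ω : Ω | pbdCnt E ℓ ω + 1 ≤ k} :=
          measure_union_le _ _
      _ ≤ q * μ {ω : Ω | pbdCnt E ℓ ω = k} + μ {ω : Ω | pbdCnt E ℓ ω + 1 ≤ k} :=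
          add_le_add_left h2 _
      _ = q * μ {ω : Ω | pbdCnt E ℓ ω = k}
            + (q + p') * μ {ω : Ω | pbdCnt E ℓ ω + 1 ≤ k} := by rw [hsum1, one_mul]
      _ = q * (μ {ω : Ω | pbdCnt E ℓ ω = k} + μ {ω : Ω | pbdCnt E ℓ ω + 1 ≤ k})
            + p' * μ {ω : Ω | pbdCnt E ℓ ω + 1 ≤ k} := by ring
      _ = q * μ {ω : Ω | pbdCnt E ℓ ω ≤ k} + p' * μ {ω : Ω | pbdCnt E ℓ ω + 1 ≤ k} := by
          rw [h4]
      _ ≤ q * ENNReal.ofReal a + p' * ENNReal.ofReal b :=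
          add_le_add (mul_le_mul_right ihk _) (mul_le_mul_right h3 _)
      _ = ENNReal.ofReal ((1 - p₁) * a + p₁ * b) := by
          rw [ENNReal.ofReal_add (mul_nonneg (by linarith) (binom_cdf_nonneg hp₁ hp₁' ℓ _))
              (mul_nonneg hp₁ (binom_cdf_nonneg hp₁ hp₁' ℓ _)),
            ENNReal.ofReal_mul (by linarith), ENNReal.ofReal_mul hp₁]
      _ = ENNReal.ofReal (∑ j ∈ Finset.range (k + 1),
            ((ℓ+1).choose j : ℝ) * p₁ ^ j * (1 - p₁) ^ (ℓ + 1 - j)) := by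
          rw [binom_cdf_step]
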